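/- Let d ≥ 1, α ∈ (0,2], m > 1, β = 1/(d(m-1)+α), k = dΓ(d/2)/((d(m-1)+α)·2^α·Γ(1+α/2)·Γ((d+α)/2)), and C = Γ(d/2 + α/(2(m-1)) + 1)·k^{d/α}/(π^{d/2}·Γ(α/(2(m-1))+1)). Then for every t > 0, the function u(x,t) = C·t^{-dβ}·(1 - k^{2/α}·‖x‖²/t^{2β})₊^{α/(2(m-1))} integrates to 1 over ℝ^d, i.e. ∫_{ℝ^d} u(x,t) dx = 1. -/

import Mathlib

open Real MeasureTheory

open intervalIntegral in
lemma real_betaIntegral {a b : ℝ} (ha : 0 < a) (hb : 0 < b) :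
    ∫ x in (0:ℝ)..1, x ^ (a - 1) * (1 - x) ^ (b - 1)
      = Real.Gamma a * Real.Gamma b / Real.Gamma (a + b) := by
  have hre : ∀ x : ℝ, 0 < (x : ℂ).re ↔ 0 < x := by intro x; simp
  have hβ := Complex.Gamma_mul_Gamma_eq_betaIntegral
    (s := (a : ℂ)) (t := (b : ℂ)) (by simpa using ha) (by simpa using hb)
  have hcast : Complex.betaIntegral a b
      = ((∫ x in (0:ℝ)..1, x ^ (a - 1) * (1 - x) ^ (b - 1) : ℝ) : ℂ) := by
    rw [Complex.betaIntegral, ← intervalIntegral.integral_ofReal]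
    refine intervalIntegral.integral_congr_ae ?_
    filter_upwards with x hx
    rw [Set.uIoc_of_le (by norm_num : (0:ℝ) ≤ 1)] at hx
    have hx0 : 0 ≤ x := hx.1.le
    have hx1 : 0 ≤ 1 - x := by linarith [hx.2]
    rw [Complex.ofReal_mul, Complex.ofReal_cpow hx0, Complex.ofReal_cpow hx1]
    push_cast
    ring_nf
  rw [hcast] at hβ
  have h2 : Complex.Gamma (a + b) = ((Real.Gamma (a + b) : ℝ) : ℂ) := by
    rw [← Complex.ofReal_add, Complex.Gamma_ofReal]
  rw [Complex.Gamma_ofReal, Complex.Gamma_ofReal, ← Complex.ofReal_add, Complex.Gamma_ofReal,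
    ← Complex.ofReal_mul, ← Complex.ofReal_mul] at hβ
  have h3 := Complex.ofReal_injective hβ
  rw [eq_div_iff (Real.Gamma_pos_of_pos (by linarith : (0:ℝ) < a + b)).ne']
  linarith [h3]

lemma key_integral (d : ℕ) (hd : 1 ≤ d) {a p : ℝ} (ha : 0 < a) (hp : 0 < p) :
    ∫ x : EuclideanSpace ℝ (Fin d), (max (1 - a * ‖x‖ ^ 2) 0) ^ p
      = Real.pi ^ ((d:ℝ)/2) * a ^ (-(d:ℝ)/2) * Real.Gamma (p+1)
        / Real.Gamma ((d:ℝ)/2 + p + 1) := by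
  haveI : Nonempty (Fin d) := ⟨⟨0, hd⟩⟩
  haveI : Nontrivial (EuclideanSpace ℝ (Fin d)) := inferInstance
  have hdpos : (0:ℝ) < d := by exact_mod_cast hd
  have hΓd : 0 < Real.Gamma ((d:ℝ)/2) := Real.Gamma_pos_of_pos (by positivity)
  -- step 1: radial reduction
  have h1 := MeasureTheory.integral_fun_norm_addHaar (volume : Measure (EuclideanSpace ℝ (Fin d)))
    (fun y => (max (1 - a * y ^ 2) 0) ^ p)
  rw [finrank_euclideanSpace_fin] at h1
  rw [h1]
  -- beta integral on (0,1)
  set f2 : ℝ → ℝ := fun u => u ^ ((d:ℝ)/2 - 1) * (max (1 - u) 0) ^ p with hf2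
  have hK1 : ∫ u in Set.Ioi (0:ℝ), f2 u
      = Real.Gamma ((d:ℝ)/2) * Real.Gamma (p+1) / Real.Gamma ((d:ℝ)/2 + (p+1)) := by
    have hsplit : ∫ u in Set.Ioi (0:ℝ), f2 u = ∫ u in Set.Ioc (0:ℝ) 1, f2 u := by
      rw [← MeasureTheory.integral_indicator measurableSet_Ioi, ← MeasureTheory.integral_indicator measurableSet_Ioc]
      congr 1
      funext u
      by_cases h1 : u ∈ Set.Ioc (0:ℝ) 1
      · rw [Set.indicator_of_mem h1, Set.indicator_of_mem (Set.mem_Ioi.mpr h1.1)]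
      · by_cases h2 : u ∈ Set.Ioi (0:ℝ)
        · rw [Set.indicator_of_mem h2, Set.indicator_of_notMem h1]
          have hu1 : 1 < u := by
            by_contra hc
            exact h1 ⟨h2, le_of_not_gt hc⟩
          have : max (1 - u) 0 = 0 := max_eq_right (by linarith)
          rw [hf2]
          simp only [this, Real.zero_rpow hp.ne', mul_zero]
        · rw [Set.indicator_of_notMem h1, Set.indicator_of_notMem h2]
    rw [hsplit, ← intervalIntegral.integral_of_le zero_le_one]
    have : ∫ u in (0:ℝ)..1, f2 u
        = ∫ u in (0:ℝ)..1, u ^ ((d:ℝ)/2 - 1) * (1 - u) ^ ((p+1) - 1) := by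
      refine intervalIntegral.integral_congr fun u hu => ?_
      rw [Set.uIcc_of_le zero_le_one] at hu
      have : max (1 - u) 0 = 1 - u := max_eq_left (by linarith [hu.2])
      rw [hf2]
      simp only [this]
      norm_num
    rw [this, real_betaIntegral (by positivity) (by positivity)]
  -- substitution u = a * x
  have hK2 : ∫ u in Set.Ioi (0:ℝ), u ^ ((d:ℝ)/2 - 1) * (max (1 - a * u) 0) ^ p
      = a ^ (-(d:ℝ)/2) *
        (Real.Gamma ((d:ℝ)/2) * Real.Gamma (p+1) / Real.Gamma ((d:ℝ)/2 + (p+1))) := by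
    have hsub := MeasureTheory.integral_comp_mul_left_Ioi f2 0 ha
    rw [mul_zero] at hsub
    have heq : ∀ x ∈ Set.Ioi (0:ℝ),
        f2 (a * x) = a ^ ((d:ℝ)/2 - 1) * (x ^ ((d:ℝ)/2 - 1) * (max (1 - a * x) 0) ^ p) := by
      intro x hx
      rw [hf2]
      simp only
      rw [Real.mul_rpow ha.le (le_of_lt hx)]
      ring
    rw [setIntegral_congr_fun measurableSet_Ioi heq, integral_const_mul, hK1,
      smul_eq_mul] at hsub
    have ha' : a ^ ((d:ℝ)/2 - 1) ≠ 0 := (Real.rpow_pos_of_pos ha _).ne'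
    have : ∫ x in Set.Ioi (0:ℝ), x ^ ((d:ℝ)/2 - 1) * (max (1 - a * x) 0) ^ p
        = (a ^ ((d:ℝ)/2 - 1))⁻¹ * (a⁻¹ *
          (Real.Gamma ((d:ℝ)/2) * Real.Gamma (p+1) / Real.Gamma ((d:ℝ)/2 + (p+1)))) := by
      rw [← hsub]
      field_simp
    rw [this]
    have hpow : (a ^ ((d:ℝ)/2 - 1))⁻¹ * a⁻¹ = a ^ (-(d:ℝ)/2) := by
      rw [← Real.rpow_neg_one a, ← Real.rpow_neg ha.le, ← Real.rpow_add ha]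
      ring_nf
    rw [← mul_assoc, hpow]
  -- substitution y^2 = u
  have hK3 : ∫ y in Set.Ioi (0:ℝ), y ^ (d-1) • (max (1 - a * y ^ 2) 0) ^ p
      = (1/2) * (a ^ (-(d:ℝ)/2) *
        (Real.Gamma ((d:ℝ)/2) * Real.Gamma (p+1) / Real.Gamma ((d:ℝ)/2 + (p+1)))) := by
    set g1 : ℝ → ℝ := fun u => u ^ ((d:ℝ)/2 - 1) * (max (1 - a * u) 0) ^ p with hg1
    have hsub := MeasureTheory.integral_comp_rpow_Ioi_of_pos (g := g1) (p := 2) two_pos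
    have heq : ∀ y ∈ Set.Ioi (0:ℝ),
        ((2:ℝ) * y ^ ((2:ℝ) - 1)) • g1 (y ^ (2:ℝ))
          = 2 * (y ^ (d-1) • (max (1 - a * y ^ 2) 0) ^ p) := by
      intro y hy
      have hy0 : (0:ℝ) < y := hy
      rw [hg1, smul_eq_mul, smul_eq_mul]
      simp only
      have h2r : y ^ ((2:ℝ)) = y ^ (2:ℕ) := by
        rw [← Real.rpow_natCast y 2]; norm_num
      have hyd : y ^ (d-1 : ℕ) = y ^ (((d:ℝ)) - 1) := by
        rw [← Real.rpow_natCast y (d-1), Nat.cast_sub hd, Nat.cast_one]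
      have hcomb : y ^ ((2:ℝ) - 1) * ((y ^ (2:ℕ) : ℝ)) ^ ((d:ℝ)/2 - 1) = y ^ ((d:ℝ) - 1) := by
        rw [← h2r, ← Real.rpow_mul hy0.le, ← Real.rpow_add hy0]
        congr 1
        ring
      rw [h2r, hyd]
      linear_combination (2 * (max (1 - a * y ^ (2:ℕ)) 0) ^ p) * hcomb
    rw [setIntegral_congr_fun measurableSet_Ioi heq, integral_const_mul] at hsub
    have : ∫ y in Set.Ioi (0:ℝ), y ^ (d-1) • (max (1 - a * y ^ 2) 0) ^ p
        = (1/2) * ∫ u in Set.Ioi (0:ℝ), g1 u := by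
      rw [← hsub]; ring
    rw [this, hK2]
  rw [hK3]
  -- volume of the unit ball and final algebra
  rw [measureReal_def, EuclideanSpace.volume_ball]
  have hvol : ((ENNReal.ofReal (1:ℝ)) ^ (Fintype.card (Fin d)) *
      ENNReal.ofReal (Real.sqrt π ^ (Fintype.card (Fin d)) / Real.Gamma ((Fintype.card (Fin d)) / 2 + 1))).toReal
      = Real.sqrt π ^ d / Real.Gamma ((d:ℝ)/2 + 1) := by
    rw [Fintype.card_fin, ENNReal.ofReal_one, one_pow, one_mul, ENNReal.toReal_ofReal]
    positivity
  rw [hvol, nsmul_eq_mul, smul_eq_mul]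
  have hsq : Real.sqrt π ^ d = π ^ ((d:ℝ)/2) := by
    rw [Real.sqrt_eq_rpow, ← Real.rpow_natCast (π ^ ((1:ℝ)/2)) d, ← Real.rpow_mul Real.pi_pos.le]
    congr 1
    ring
  have hΓ1 : Real.Gamma ((d:ℝ)/2 + 1) = ((d:ℝ)/2) * Real.Gamma ((d:ℝ)/2) :=
    Real.Gamma_add_one (by positivity)
  have hG3 : Real.Gamma ((d:ℝ)/2 + (p+1)) = Real.Gamma ((d:ℝ)/2 + p + 1) := by ring_nf
  have hG3pos : 0 < Real.Gamma ((d:ℝ)/2 + p + 1) := Real.Gamma_pos_of_pos (by positivity)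
  rw [hsq, hΓ1, hG3]
  field_simp

theorem barenblatt_mass_conservation (d : ℕ) (hd : 1 ≤ d) (α m β k C : ℝ)
    (hα : α ∈ Set.Ioc (0:ℝ) 2) (hm : 1 < m)
    (hβ : β = 1 / (d * (m - 1) + α))
    (hk : k = d * Real.Gamma (d / 2) /
      ((d * (m - 1) + α) * (2:ℝ) ^ α * Real.Gamma (1 + α / 2) *
        Real.Gamma ((d + α) / 2)))
    (hC : C = Real.Gamma ((d:ℝ) / 2 + α / (2 * (m - 1)) + 1) * k ^ ((d:ℝ) / α) /
      (Real.pi ^ ((d:ℝ) / 2) * Real.Gamma (α / (2 * (m - 1)) + 1)))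
    (t : ℝ) (ht : 0 < t) :
    ∫ x : EuclideanSpace ℝ (Fin d),
      C * t ^ (-((d:ℝ) * β)) *
        (max (1 - k ^ (2 / α) * ‖x‖ ^ 2 / t ^ (2 * β)) 0) ^ (α / (2 * (m - 1))) = 1 := by
  have hα0 : 0 < α := hα.1
  have hm1 : (0:ℝ) < m - 1 := by linarith
  have hdpos : (0:ℝ) < d := by exact_mod_cast hd
  have hP : 0 < α / (2 * (m - 1)) := by positivity
  have hk0 : 0 < k := by
    rw [hk]
    have h1 : (0:ℝ) < d * Real.Gamma (d / 2) :=
      mul_pos hdpos (Real.Gamma_pos_of_pos (by positivity))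
    have h2 : (0:ℝ) < (d * (m - 1) + α) := by positivity
    have h3 : (0:ℝ) < (2:ℝ) ^ α := Real.rpow_pos_of_pos two_pos α
    have h4 : (0:ℝ) < Real.Gamma (1 + α / 2) := Real.Gamma_pos_of_pos (by positivity)
    have h5 : (0:ℝ) < Real.Gamma ((d + α) / 2) := Real.Gamma_pos_of_pos (by positivity)
    positivity
  set A : ℝ := k ^ (2 / α) / t ^ (2 * β) with hAdef
  have hA : 0 < A := div_pos (Real.rpow_pos_of_pos hk0 _) (Real.rpow_pos_of_pos ht _)
  have hstep : (∫ x : EuclideanSpace ℝ (Fin d),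
      C * t ^ (-((d:ℝ) * β)) *
        (max (1 - k ^ (2 / α) * ‖x‖ ^ 2 / t ^ (2 * β)) 0) ^ (α / (2 * (m - 1))))
      = C * t ^ (-((d:ℝ) * β)) * ∫ x : EuclideanSpace ℝ (Fin d),
        (max (1 - A * ‖x‖ ^ 2) 0) ^ (α / (2 * (m - 1))) := by
    rw [← MeasureTheory.integral_const_mul]
    congr 1
    funext x
    have : k ^ (2 / α) * ‖x‖ ^ 2 / t ^ (2 * β) = A * ‖x‖ ^ 2 := by
      rw [hAdef]; ring
    rw [this]
  rw [hstep, key_integral d hd hA hP]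
  have hA2 : A ^ (-(d:ℝ)/2) = k ^ (-((d:ℝ)/α)) * t ^ ((d:ℝ)*β) := by
    rw [hAdef, Real.div_rpow (Real.rpow_nonneg hk0.le _) (Real.rpow_nonneg ht.le _),
      ← Real.rpow_mul hk0.le, ← Real.rpow_mul ht.le]
    rw [show (2/α) * (-(d:ℝ)/2) = -((d:ℝ)/α) by field_simp,
      show (2*β) * (-(d:ℝ)/2) = -((d:ℝ)*β) by ring]
    rw [Real.rpow_neg ht.le, div_eq_mul_inv, inv_inv]
  rw [hA2, hC]
  have ht1 : t ^ (-((d:ℝ)*β)) * t ^ ((d:ℝ)*β) = 1 := by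
    rw [← Real.rpow_add ht]; simp
  have hk1 : k ^ ((d:ℝ)/α) * k ^ (-((d:ℝ)/α)) = 1 := by
    rw [← Real.rpow_add hk0]; simp
  have e1 : Real.pi ^ ((d:ℝ)/2) ≠ 0 := (Real.rpow_pos_of_pos Real.pi_pos _).ne'
  have e2 : Real.Gamma (α / (2 * (m - 1)) + 1) ≠ 0 :=
    (Real.Gamma_pos_of_pos (by positivity)).ne'
  have e3 : Real.Gamma ((d:ℝ)/2 + α / (2 * (m - 1)) + 1) ≠ 0 :=
    (Real.Gamma_pos_of_pos (by positivity)).ne'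
  have hmain : Real.Gamma ((d:ℝ) / 2 + α / (2 * (m - 1)) + 1) * k ^ ((d:ℝ) / α) /
      (Real.pi ^ ((d:ℝ) / 2) * Real.Gamma (α / (2 * (m - 1)) + 1)) * t ^ (-((d:ℝ) * β)) *
      (Real.pi ^ ((d:ℝ)/2) * (k ^ (-((d:ℝ)/α)) * t ^ ((d:ℝ)*β)) *
        Real.Gamma (α / (2 * (m - 1)) + 1) / Real.Gamma ((d:ℝ)/2 + α / (2 * (m - 1)) + 1))
      = (t ^ (-((d:ℝ)*β)) * t ^ ((d:ℝ)*β)) * (k ^ ((d:ℝ)/α) * k ^ (-((d:ℝ)/α))) := by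
    field_simp
  rw [hmain, ht1, hk1]
  norm_num
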